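/- Suppose gcd(m,n) = d, and let x ∈ V^m be a fixed point of a word p ∈ [m]^n (under the letter-action on V^m) with all coordinates of x pairwise non-congruent modulo m. Then the coordinates of x can be partitioned into d blocks of size m/d such that two coordinates lie in the same block if and only if their difference is divisible by d; moreover no two distinct coordinates differ by a multiple of m. -/
import Mathlib


/-- The shift during the action of letter `i` on `ℝ^m`: add `m` to coordinate `i`
and subtract `1` from every coordinate. -/
def shiftVec (m : ℕ) (i : Fin m) (x : Fin m → ℝ) : Fin m → ℝ :=
  fun j => x j - 1 + if j = i then (m : ℝ) else 0

/-- Sort the coordinates of a vector into weakly increasing order. -/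
noncomputable def sortVec {m : ℕ} (x : Fin m → ℝ) : Fin m → ℝ := x ∘ Tuple.sort x

/-- The action of the letter `i ∈ [m]` on `V^m`: shift, then re-sort. -/
noncomputable def letterV (m : ℕ) (i : Fin m) (x : Fin m → ℝ) : Fin m → ℝ :=
  sortVec (shiftVec m i x)

/-- `stepsV m p x i = p_{i-1} ⋯ p_1 p_0 ⋅ x`: the word acts letter by letter, the
letter `p 0` (rightmost) acting first. -/
noncomputable def stepsV (m : ℕ) (p : ℕ → Fin m) (x : Fin m → ℝ) : ℕ → (Fin m → ℝ)
  | 0 => x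
  | k+1 => letterV m (p k) (stepsV m p x k)

/-- Membership in the Weyl chamber `V^m`: coordinates sum to `0` and are weakly
increasing. -/
def InV (m : ℕ) (x : Fin m → ℝ) : Prop := (∑ j, x j) = 0 ∧ Monotone x

/-- The Euclidean norm on `ℝ^m`. -/
noncomputable def eNorm {m : ℕ} (x : Fin m → ℝ) : ℝ := Real.sqrt (∑ j, (x j) ^ 2)

/-- If `gcd(m,n) = d` and `x ∈ V^m` is a fixed point of a word `p ∈ [m]^n` whose
coordinates are pairwise non-congruent mod `m`, then the coordinates can be
partitioned into `d` blocks of size `m/d`, two coordinates lying in the same block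
iff their difference is divisible by `d`; moreover no two distinct coordinates
differ by a multiple of `m`. -/
theorem fixed_point_partition (m n : ℕ) (hm : 0 < m) (hn : 0 < n)
    (p : ℕ → Fin m) (x : Fin m → ℝ) (hx : InV m x)
    (hfix : stepsV m p x n = x)
    (halc : ∀ j k : Fin m, j ≠ k → ∀ t : ℤ, x j - x k ≠ (m : ℝ) * t) :
    ∃ B : Fin m → Fin (Nat.gcd m n),
      (∀ c : Fin (Nat.gcd m n),
        (Finset.univ.filter (fun j => B j = c)).card = m / Nat.gcd m n) ∧
      (∀ j k : Fin m, B j = B k ↔ ∃ t : ℤ, x j - x k = (Nat.gcd m n : ℝ) * t) ∧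
      (∀ j k : Fin m, j ≠ k → ∀ t : ℤ, x j - x k ≠ (m : ℝ) * t) := by
  classical
  set d := Nat.gcd m n with hd
  have hd0 : 0 < d := Nat.gcd_pos_of_pos_left n hm
  have hdm : d ∣ m := Nat.gcd_dvd_left m n
  have hdn : d ∣ n := Nat.gcd_dvd_right m n
  set s := m / d with hsdef
  have hms : d * s = m := Nat.mul_div_cancel' hdm
  have hs0 : 0 < s := Nat.div_pos (Nat.le_of_dvd hm hdm) hd0
  set n' := n / d with hn'def
  have hnn : d * n' = n := Nat.mul_div_cancel' hdn
  have hco : Nat.Coprime s n' := Nat.coprime_div_gcd_div_gcd hd0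
  -- step 1: structure of the orbit
  have key : ∀ k : ℕ, ∃ e : Equiv.Perm (Fin m), ∃ t : Fin m → ℤ,
      ∀ j, stepsV m p x k j = x (e j) - k + m * t j := by
    intro k
    induction k with
    | zero => exact ⟨1, 0, fun j => by simp [stepsV]⟩
    | succ k ih =>
      obtain ⟨e, t, ht⟩ := ih
      set y := stepsV m p x k with hy
      set τ := Tuple.sort (shiftVec m (p k) y) with hτ
      refine ⟨τ.trans e, fun j => t (τ j) + (if τ j = p k then 1 else 0), fun j => ?_⟩
      show letterV m (p k) y j = _
      have h1 : letterV m (p k) y j = shiftVec m (p k) y (τ j) := rfl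
      rw [h1]
      unfold shiftVec
      rw [ht (τ j)]
      simp only [Equiv.trans_apply]
      push_cast
      split_ifs <;> ring
  obtain ⟨σ, t, ht⟩ := key n
  have hfp : ∀ j, x (σ j) = x j + n - m * t j := by
    intro j
    have h := ht j
    rw [hfix] at h
    linarith
  have hiter : ∀ k : ℕ, ∀ j, ∃ T : ℤ, x ((σ ^ k) j) = x j + (k * n : ℕ) - m * T := by
    intro k
    induction k with
    | zero => exact fun j => ⟨0, by simp⟩
    | succ k ih =>
      intro j
      obtain ⟨T, hT⟩ := ih j
      refine ⟨T + t ((σ ^ k) j), ?_⟩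
      have h1 : (σ ^ (k + 1)) j = σ ((σ ^ k) j) := by
        rw [pow_succ']; rfl
      rw [h1, hfp, hT]
      push_cast
      ring
  -- the equivalence relation
  set R : Fin m → Fin m → Prop := fun j k => ∃ u : ℤ, x j - x k = (d : ℝ) * u with hR
  have hRrefl : ∀ j, R j j := fun j => ⟨0, by simp⟩
  have hRsymm : ∀ {j k}, R j k → R k j := by
    rintro j k ⟨u, hu⟩; exact ⟨-u, by push_cast; linarith⟩
  have hRtrans : ∀ {i j k}, R i j → R j k → R i k := by
    rintro i j k ⟨u, hu⟩ ⟨v, hv⟩; exact ⟨u + v, by push_cast; linarith⟩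
  -- every class has exactly s elements
  have hcard : ∀ j : Fin m, (Finset.univ.filter (fun k => R k j)).card = s := by
    intro j
    haveI : NeZero s := ⟨hs0.ne'⟩
    apply le_antisymm
    · set f : Fin m → ZMod s := fun k =>
        if h : R k j then ((h.choose : ℤ) : ZMod s) else 0 with hf
      have hinj : Set.InjOn f (Finset.univ.filter (fun k => R k j)) := by
        intro a ha b hb hab
        simp only [Finset.coe_filter, Set.mem_setOf_eq] at ha hb
        have Ra : R a j := ha.2
        have Rb : R b j := hb.2
        rw [hf] at hab
        simp only [dif_pos Ra, dif_pos Rb] at hab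
        have hdvd : (s : ℤ) ∣ Ra.choose - Rb.choose := by
          have h0 : ((Ra.choose - Rb.choose : ℤ) : ZMod s) = 0 := by
            push_cast
            rw [hab]
            ring
          exact (ZMod.intCast_zmod_eq_zero_iff_dvd _ _).mp h0
        obtain ⟨w, hw⟩ := hdvd
        by_contra hne
        have hxa := Ra.choose_spec
        have hxb := Rb.choose_spec
        apply halc a b hne w
        have : x a - x b = (d : ℝ) * (Ra.choose - Rb.choose) := by push_cast; linarith
        rw [this]
        have hw' : ((Ra.choose : ℝ) - Rb.choose) = (s : ℝ) * w := by exact_mod_cast hw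
        have h2 : (m : ℝ) = d * s := by exact_mod_cast hms.symm
        rw [hw', h2]
        ring
      calc (Finset.univ.filter (fun k => R k j)).card
          ≤ (Finset.univ : Finset (ZMod s)).card :=
            Finset.card_le_card_of_injOn f (fun _ _ => Finset.mem_univ _) hinj
        _ = s := by rw [Finset.card_univ, ZMod.card]
    · have hmaps : ∀ k ∈ Finset.range s, (σ ^ k) j ∈ Finset.univ.filter (fun k => R k j) := by
        intro k _
        simp only [Finset.mem_filter, Finset.mem_univ, true_and]
        obtain ⟨T, hT⟩ := hiter k j
        refine ⟨(k : ℤ) * n' - s * T, ?_⟩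
        rw [hT]
        have h1 : (n : ℝ) = d * n' := by exact_mod_cast hnn.symm
        have h2 : (m : ℝ) = d * s := by exact_mod_cast hms.symm
        push_cast [h1, h2]
        ring
      have hinj : Set.InjOn (fun k => (σ ^ k) j) (Finset.range s) := by
        intro a ha b hb hab
        simp only [Finset.coe_range, Set.mem_Iio] at ha hb
        obtain ⟨Ta, hTa⟩ := hiter a j
        obtain ⟨Tb, hTb⟩ := hiter b j
        have hxe : x ((σ ^ a) j) = x ((σ ^ b) j) := congrArg x hab
        rw [hTa, hTb] at hxe
        have hz : ((a * n : ℕ) : ℤ) - m * Ta = ((b * n : ℕ) : ℤ) - m * Tb := by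
          have : (((a * n : ℕ) : ℤ) - m * Ta : ℝ) = (((b * n : ℕ) : ℤ) - m * Tb : ℝ) := by
            push_cast
            push_cast at hxe
            linarith
          exact_mod_cast this
        have hdvd : (m : ℤ) ∣ ((a : ℤ) - b) * n := ⟨Ta - Tb, by push_cast at hz ⊢; linear_combination hz⟩
        have h2 : ((d : ℤ) * s) ∣ (d : ℤ) * (((a : ℤ) - b) * n') := by
          have e1 : ((d : ℤ) * s) = (m : ℤ) := by exact_mod_cast hms
          have e2 : (d : ℤ) * (((a : ℤ) - b) * n') = ((a : ℤ) - b) * n := by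
            have : ((d : ℤ) * n') = (n : ℤ) := by exact_mod_cast hnn
            rw [← this]; ring
          rw [e1, e2]; exact hdvd
        have h3 : (s : ℤ) ∣ ((a : ℤ) - b) * n' := by
          have hd0' : (d : ℤ) ≠ 0 := by exact_mod_cast hd0.ne'
          exact (mul_dvd_mul_iff_left hd0').mp h2
        have h4 : (s : ℤ) ∣ (a : ℤ) - b :=
          (Nat.isCoprime_iff_coprime.mpr hco).dvd_of_dvd_mul_right h3
        have h5 : (a : ℤ) - b = 0 := by
          refine Int.eq_zero_of_abs_lt_dvd h4 ?_
          rw [abs_lt]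
          constructor <;> [skip; skip] <;> push_cast <;> omega
        omega
      have := Finset.card_le_card_of_injOn (fun k => (σ ^ k) j) hmaps hinj
      rwa [Finset.card_range] at this
  -- build the quotient
  letI Sd : Setoid (Fin m) := ⟨fun j k => R j k, ⟨hRrefl, fun h => hRsymm h, fun h h' => hRtrans h h'⟩⟩
  have hQeq : ∀ j k : Fin m, (⟦j⟧ : Quotient Sd) = ⟦k⟧ ↔ R j k := fun j k => Quotient.eq
  have hfiber : ∀ q : Quotient Sd, (Finset.univ.filter (fun j => (⟦j⟧ : Quotient Sd) = q)).card = s := by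
    intro q
    obtain ⟨j0, rfl⟩ := Quotient.exists_rep q
    have hset : Finset.univ.filter (fun j => (⟦j⟧ : Quotient Sd) = ⟦j0⟧)
        = Finset.univ.filter (fun k => R k j0) := by
      ext j
      simp only [Finset.mem_filter, Finset.mem_univ, true_and]
      exact hQeq j j0
    rw [hset]
    exact hcard j0
  have hm_eq : m = Fintype.card (Quotient Sd) * s := by
    have h0 := Finset.card_eq_sum_card_fiberwise
      (f := fun j : Fin m => (⟦j⟧ : Quotient Sd)) (s := Finset.univ) (t := Finset.univ)
      (fun j _ => Finset.mem_univ _)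
    rw [Finset.card_univ, Fintype.card_fin] at h0
    calc m = ∑ q : Quotient Sd, (Finset.univ.filter (fun j => (⟦j⟧ : Quotient Sd) = q)).card := h0
      _ = ∑ _q : Quotient Sd, s := Finset.sum_congr rfl (fun q _ => hfiber q)
      _ = Fintype.card (Quotient Sd) * s := by
          rw [Finset.sum_const, smul_eq_mul, Finset.card_univ]
  have hQcard : Fintype.card (Quotient Sd) = d := by
    have h : Fintype.card (Quotient Sd) * s = d * s := by rw [← hm_eq, hms]
    exact Nat.eq_of_mul_eq_mul_right hs0 h
  set e : Quotient Sd ≃ Fin d := Fintype.equivFinOfCardEq hQcard with he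
  refine ⟨fun j => e ⟦j⟧, ?_, ?_, halc⟩
  · intro c
    have hset : Finset.univ.filter (fun j : Fin m => e ⟦j⟧ = c)
        = Finset.univ.filter (fun j => (⟦j⟧ : Quotient Sd) = e.symm c) := by
      ext j
      simp only [Finset.mem_filter, Finset.mem_univ, true_and]
      exact (Equiv.apply_eq_iff_eq_symm_apply e)
    rw [hset]
    exact hfiber _
  · intro j k
    rw [Equiv.apply_eq_iff_eq]
    exact hQeq j k
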